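/- Let w0 ∈ k^d, H_{w0} = {γ ∈ SO(J') : γ J' w0 = J' w0}, and R_ℓ = {m(γ) v : γ ∈ H_{w0}, v ∈ V_ℓ}. Then the map R_ℓ → ℂˣ sending m(γ) v to χ_{w0}(v) (for γ ∈ H_{w0} and v ∈ V_ℓ) is well-defined and is a group homomorphism on R_ℓ; in particular it extends χ_{w0} from V_ℓ to the Bessel subgroup R_ℓ, and it is trivial on m(H_{w0}). -/

import Mathlib

open Matrix

noncomputable section

/-- Index type for the 3-block decomposition of size `ℓ + d + ℓ`. -/
abbrev Idx (ℓ d : ℕ) : Type := Fin ℓ ⊕ (Fin d ⊕ Fin ℓ)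

variable {k : Type*} [Field k]

/-- The `n × n` matrix built out of nine blocks of sizes `ℓ, d, ℓ`. -/
def blk3 {ℓ d : ℕ}
    (A : Matrix (Fin ℓ) (Fin ℓ) k) (B : Matrix (Fin ℓ) (Fin d) k) (C : Matrix (Fin ℓ) (Fin ℓ) k)
    (D : Matrix (Fin d) (Fin ℓ) k) (E : Matrix (Fin d) (Fin d) k) (F : Matrix (Fin d) (Fin ℓ) k)
    (G : Matrix (Fin ℓ) (Fin ℓ) k) (H : Matrix (Fin ℓ) (Fin d) k) (I : Matrix (Fin ℓ) (Fin ℓ) k) :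
    Matrix (Idx ℓ d) (Idx ℓ d) k :=
  Matrix.fromBlocks A (Matrix.fromCols B C) (Matrix.fromRows D G) (Matrix.fromBlocks E F H I)

/-- The `ℓ × ℓ` exchange matrix `K` (ones on the antidiagonal). -/
def exK (k : Type*) [Field k] (ℓ : ℕ) : Matrix (Fin ℓ) (Fin ℓ) k :=
  Matrix.of fun i j => if (i : ℕ) + (j : ℕ) = ℓ - 1 then 1 else 0

/-- The symmetric matrix `J = [[0,0,K],[0,J',0],[K,0,0]]`. -/
def Jmat {d : ℕ} (ℓ : ℕ) (J' : Matrix (Fin d) (Fin d) k) : Matrix (Idx ℓ d) (Idx ℓ d) k :=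
  blk3 0 0 (exK k ℓ) 0 J' 0 (exK k ℓ) 0 0

/-- The special orthogonal group of an invertible symmetric matrix `S`:
`SO(S) = {g : gᵀ S g = S, det g = 1}`. -/
def SO {m : Type*} [Fintype m] [DecidableEq m] (S : Matrix m m k) : Set (Matrix m m k) :=
  {g | gᵀ * S * g = S ∧ g.det = 1}

/-- Upper unitriangular matrices (the group `Z_ℓ`). -/
def IsUnitri {ℓ : ℕ} (z : Matrix (Fin ℓ) (Fin ℓ) k) : Prop :=
  (∀ i, z i i = 1) ∧ ∀ i j : Fin ℓ, (j : ℕ) < (i : ℕ) → z i j = 0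

/-- The unipotent subgroup `V_ℓ ⊆ SO(J)`: elements of `SO(J)` of block form
`[[z, y, x], [0, I, y'], [0, 0, w]]` with `z` upper unitriangular. -/
def Vl {d : ℕ} (ℓ : ℕ) (J' : Matrix (Fin d) (Fin d) k) :
    Set (Matrix (Idx ℓ d) (Idx ℓ d) k) :=
  {g | g ∈ SO (Jmat ℓ J') ∧ ∃ z y x y' w, IsUnitri z ∧ g = blk3 z y x 0 1 y' 0 0 w}

/-- The top-left `ℓ × ℓ` block `z` of a matrix. -/
def zBlk {ℓ d : ℕ} (g : Matrix (Idx ℓ d) (Idx ℓ d) k) : Matrix (Fin ℓ) (Fin ℓ) k :=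
  Matrix.of fun i j => g (Sum.inl i) (Sum.inl j)

/-- The top-middle `ℓ × d` block `y` of a matrix. -/
def yBlk {ℓ d : ℕ} (g : Matrix (Idx ℓ d) (Idx ℓ d) k) : Matrix (Fin ℓ) (Fin d) k :=
  Matrix.of fun i j => g (Sum.inl i) (Sum.inr (Sum.inl j))

/-- Sum of the superdiagonal entries `Σ_{i} z_{i, i+1}`. -/
def superdiag {ℓ : ℕ} (z : Matrix (Fin ℓ) (Fin ℓ) k) : k :=
  ∑ i : Fin ℓ, ∑ j : Fin ℓ, if (j : ℕ) = (i : ℕ) + 1 then z i j else 0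

/-- The last row `y_ℓ` of an `ℓ × d` matrix (as a vector in `k^d`). -/
def lastRow {ℓ d : ℕ} (y : Matrix (Fin ℓ) (Fin d) k) : Fin d → k :=
  fun j => ∑ i : Fin ℓ, if (i : ℕ) + 1 = ℓ then y i j else 0

/-- The Bessel character `χ_{w0}(g) = ψ(Σ_i z_{i,i+1} + y_ℓ J' w0)`. -/
def besselChar {ℓ d : ℕ} (ψ : AddChar k ℂˣ) (J' : Matrix (Fin d) (Fin d) k) (w0 : Fin d → k)
    (g : Matrix (Idx ℓ d) (Idx ℓ d) k) : ℂˣ :=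
  ψ (superdiag (zBlk g) + lastRow (yBlk g) ⬝ᵥ J'.mulVec w0)

/-- The block-diagonal embedding `m : γ ↦ blockdiag(I_ℓ, γ, I_ℓ)`. -/
def mEmb {d : ℕ} (ℓ : ℕ) (γ : Matrix (Fin d) (Fin d) k) : Matrix (Idx ℓ d) (Idx ℓ d) k :=
  blk3 1 0 0 0 γ 0 0 0 1

/-- The stabilizer `H_{w0} = {γ ∈ SO(J') : γ J' w0 = J' w0}`. -/
def Hstab {d : ℕ} (J' : Matrix (Fin d) (Fin d) k) (w0 : Fin d → k) :
    Set (Matrix (Fin d) (Fin d) k) :=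
  {γ | γ ∈ SO J' ∧ γ.mulVec (J'.mulVec w0) = J'.mulVec w0}

/-- The Bessel subgroup `R_ℓ = {m(γ) v : γ ∈ H_{w0}, v ∈ V_ℓ}`. -/
def Rl {d : ℕ} (ℓ : ℕ) (J' : Matrix (Fin d) (Fin d) k) (w0 : Fin d → k) :
    Set (Matrix (Idx ℓ d) (Idx ℓ d) k) :=
  {g | ∃ γ ∈ Hstab J' w0, ∃ v ∈ Vl ℓ J', g = mEmb ℓ γ * v}

/-- The superdiagonal of `z`, as a vector in `k^{ℓ-1}`. -/
def sdVec {ℓ : ℕ} (z : Matrix (Fin ℓ) (Fin ℓ) k) : Fin (ℓ - 1) → k :=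
  fun i => z ⟨(i : ℕ), by have := i.isLt; omega⟩ ⟨(i : ℕ) + 1, by have := i.isLt; omega⟩

/-- The projection of `V_ℓ` onto its abelianization `k^{ℓ-1} × k^d`,
`g ↦ ((z_{1,2}, …, z_{ℓ-1,ℓ}), y_ℓ)`. -/
def projVl {ℓ d : ℕ} (g : Matrix (Idx ℓ d) (Idx ℓ d) k) : (Fin (ℓ - 1) → k) × (Fin d → k) :=
  (sdVec (zBlk g), lastRow (yBlk g))

section AuxLemmas

variable {ℓ d : ℕ}

lemma blk3_mul (A B C D E F G H I : _) (A' B' C' D' E' F' G' H' I' : _) :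
    blk3 (k := k) (ℓ := ℓ) (d := d) A B C D E F G H I *
      blk3 A' B' C' D' E' F' G' H' I' =
    blk3 (A*A' + B*D' + C*G') (A*B' + B*E' + C*H') (A*C' + B*F' + C*I')
         (D*A' + E*D' + F*G') (D*B' + E*E' + F*H') (D*C' + E*F' + F*I')
         (G*A' + H*D' + I*G') (G*B' + H*E' + I*H') (G*C' + H*F' + I*I') := by
  ext i j
  rcases i with i | i | i <;> rcases j with j | j | j <;>
    simp [blk3, Matrix.mul_apply, Matrix.fromBlocks, Matrix.fromCols,
      Matrix.fromRows_apply_inl, Matrix.fromRows_apply_inr, Fintype.sum_sum_type, Finset.sum_add_distrib, add_assoc]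

lemma zBlk_blk3 (A B C D E F G H I : _) :
    zBlk (blk3 (k := k) (ℓ := ℓ) (d := d) A B C D E F G H I) = A := by
  ext i j; simp [zBlk, blk3, Matrix.fromBlocks]

lemma yBlk_blk3 (A B C D E F G H I : _) :
    yBlk (blk3 (k := k) (ℓ := ℓ) (d := d) A B C D E F G H I) = B := by
  ext i j; simp [yBlk, blk3, Matrix.fromBlocks, Matrix.fromCols]

lemma superdiag_one : superdiag (1 : Matrix (Fin ℓ) (Fin ℓ) k) = 0 := by
  unfold superdiag
  rw [Finset.sum_eq_zero]
  intro i _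
  rw [Finset.sum_eq_zero]
  intro j _
  split
  · rename_i h
    rw [Matrix.one_apply_ne]
    intro hij; rw [hij] at h; omega
  · rfl

lemma superdiag_mul {z z' : Matrix (Fin ℓ) (Fin ℓ) k} (hz : IsUnitri z) (hz' : IsUnitri z') :
    superdiag (z * z') = superdiag z + superdiag z' := by
  unfold superdiag
  rw [← Finset.sum_add_distrib]
  refine Finset.sum_congr rfl fun i _ => ?_
  rw [← Finset.sum_add_distrib]
  refine Finset.sum_congr rfl fun j _ => ?_
  split
  · rename_i h
    rw [Matrix.mul_apply]
    have key : ∀ m : Fin ℓ, z i m * z' m j =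
        (if m = i then z' i j else 0) + (if m = j then z i j else 0) := by
      intro m
      rcases eq_or_ne m i with rfl | hmi
      · have hmj : m ≠ j := by intro hh; rw [hh] at h; omega
        simp [hmj, hz.1]
      rcases eq_or_ne m j with rfl | hmj
      · simp [hmi, hz'.1]
      · have : (m : ℕ) < (i : ℕ) ∨ (j : ℕ) < (m : ℕ) := by
          have h1 : (m : ℕ) ≠ (i : ℕ) := fun hh => hmi (Fin.ext hh)
          have h2 : (m : ℕ) ≠ (j : ℕ) := fun hh => hmj (Fin.ext hh)
          omega
        rcases this with hlt | hlt
        · simp [hmi, hmj, hz.2 i m (by omega)]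
        · simp [hmi, hmj, hz'.2 m j hlt]
    rw [Finset.sum_congr rfl fun m _ => key m, Finset.sum_add_distrib,
      Finset.sum_ite_eq' _ i, Finset.sum_ite_eq' _ j]
    simp [add_comm]
  · simp

lemma lastRow_eq (hl : 0 < ℓ) (y : Matrix (Fin ℓ) (Fin d) k) (j : Fin d) :
    lastRow y j = y ⟨ℓ - 1, by omega⟩ j := by
  unfold lastRow
  have key : ∀ i : Fin ℓ, (if (i : ℕ) + 1 = ℓ then y i j else 0) =
      if i = (⟨ℓ - 1, by omega⟩ : Fin ℓ) then y i j else 0 := by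
    intro i
    have : ((i : ℕ) + 1 = ℓ) ↔ i = (⟨ℓ - 1, by omega⟩ : Fin ℓ) := by
      constructor
      · intro h; exact Fin.ext (by simp; omega)
      · intro h; rw [h]; simp; omega
    simp only [this]
  rw [Finset.sum_congr rfl fun i _ => key i, Finset.sum_ite_eq' _ _]
  simp

lemma lastRow_unitri_mul (hl : 0 < ℓ) {z : Matrix (Fin ℓ) (Fin ℓ) k} (hz : IsUnitri z)
    (y : Matrix (Fin ℓ) (Fin d) k) : lastRow (z * y) = lastRow y := by
  funext j
  rw [lastRow_eq hl, lastRow_eq hl, Matrix.mul_apply]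
  set iℓ : Fin ℓ := ⟨ℓ - 1, by omega⟩ with hiℓ
  have key : ∀ m : Fin ℓ, z iℓ m * y m j = if m = iℓ then y iℓ j else 0 := by
    intro m
    rcases eq_or_ne m iℓ with rfl | hm
    · simp [hz.1]
    · have : (m : ℕ) < (iℓ : ℕ) := by
        have h1 : (m : ℕ) ≠ (iℓ : ℕ) := fun hh => hm (Fin.ext hh)
        have := m.isLt
        simp only [hiℓ] at h1 ⊢
        omega
      simp [hm, hz.2 iℓ m this]
  rw [Finset.sum_congr rfl fun m _ => key m, Finset.sum_ite_eq' _ _]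
  simp

lemma lastRow_mul_right (hl : 0 < ℓ) (y : Matrix (Fin ℓ) (Fin d) k)
    (γ : Matrix (Fin d) (Fin d) k) : lastRow (y * γ) = Matrix.vecMul (lastRow y) γ := by
  funext j
  rw [lastRow_eq hl, Matrix.mul_apply, Matrix.vecMul, dotProduct]
  refine Finset.sum_congr rfl fun m _ => ?_
  rw [lastRow_eq hl]

lemma lastRow_add (y y' : Matrix (Fin ℓ) (Fin d) k) :
    lastRow (y + y') = lastRow y + lastRow y' := by
  funext j
  unfold lastRow
  simp only [Pi.add_apply, Matrix.add_apply]
  rw [← Finset.sum_add_distrib]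
  refine Finset.sum_congr rfl fun i _ => ?_
  split <;> simp

lemma mEmb_mul_blk3 (γ : Matrix (Fin d) (Fin d) k) (z y x y' w : _) :
    mEmb ℓ γ * blk3 z y x 0 1 y' 0 0 w = blk3 z y x 0 γ (γ * y') 0 0 w := by
  rw [mEmb, blk3_mul]
  simp

end AuxLemmas

/-- the map `R_ℓ → ℂˣ`, `m(γ) v ↦ χ_{w0}(v)` (for `γ ∈ H_{w0}`, `v ∈ V_ℓ`)
is well-defined and a group homomorphism on `R_ℓ`; it extends `χ_{w0}` from `V_ℓ` and is
trivial on `m(H_{w0})`. -/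
theorem besselChar_extends_to_Rl {k : Type*} [Field k] {ℓ d : ℕ} (hl : 0 < ℓ) (hd : 0 < d)
    (J' : Matrix (Fin d) (Fin d) k) (hJ'sym : J'ᵀ = J') (hJ'inv : IsUnit J')
    (ψ : AddChar k ℂˣ) (w0 : Fin d → k) :
    ∃ χe : Matrix (Idx ℓ d) (Idx ℓ d) k → ℂˣ,
      -- well-defined: the value on any product `m(γ) v` is `χ_{w0}(v)`
      (∀ γ ∈ Hstab J' w0, ∀ v ∈ Vl ℓ J', χe (mEmb ℓ γ * v) = besselChar ψ J' w0 v) ∧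
      -- group homomorphism on `R_ℓ`
      (∀ g ∈ Rl ℓ J' w0, ∀ g' ∈ Rl ℓ J' w0, χe (g * g') = χe g * χe g') ∧
      -- extends `χ_{w0}` from `V_ℓ`
      (∀ v ∈ Vl ℓ J', χe v = besselChar ψ J' w0 v) ∧
      -- trivial on `m(H_{w0})`
      (∀ γ ∈ Hstab J' w0, χe (mEmb ℓ γ) = 1) := by
  classical
  refine ⟨besselChar ψ J' w0, ?_, ?_, ?_, ?_⟩
  case refine_3 => exact fun v _ => rfl
  · -- well-definedness
    intro γ hγ v hv
    obtain ⟨hSO, z, y, x, y', w, hzu, rfl⟩ := hv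
    rw [mEmb_mul_blk3]
    unfold besselChar
    rw [zBlk_blk3, yBlk_blk3, zBlk_blk3, yBlk_blk3]
  · -- homomorphism
    intro g hg g' hg'
    obtain ⟨γ, hγ, v, hv, rfl⟩ := hg
    obtain ⟨γ', hγ', v', hv', rfl⟩ := hg'
    obtain ⟨hSO, z, y, x, y', w, hzu, rfl⟩ := hv
    obtain ⟨hSO', z₂, y₂, x₂, y₂', w₂, hzu₂, rfl⟩ := hv'
    rw [mEmb_mul_blk3, mEmb_mul_blk3]
    unfold besselChar
    rw [blk3_mul]
    rw [zBlk_blk3, yBlk_blk3, zBlk_blk3, yBlk_blk3, zBlk_blk3, yBlk_blk3]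
    simp only [Matrix.mul_zero, Matrix.zero_mul, Matrix.mul_one, Matrix.one_mul,
      add_zero, zero_add]
    rw [superdiag_mul hzu hzu₂, lastRow_add, lastRow_unitri_mul hl hzu,
      lastRow_mul_right hl, add_dotProduct, ← dotProduct_mulVec, hγ'.2,
      ← ψ.map_add_eq_mul]
    congr 1
    ring
  · -- trivial on m(H_{w0})
    intro γ hγ
    unfold besselChar mEmb
    rw [zBlk_blk3, yBlk_blk3, superdiag_one]
    have h0 : lastRow (0 : Matrix (Fin ℓ) (Fin d) k) = 0 := by
      funext j; rw [lastRow_eq hl]; simp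
    rw [h0, zero_dotProduct, add_zero, ψ.map_zero_eq_one]
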